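/- Dwass's formula: Let T be a Galton–Watson tree with offspring distribution given by a probability mass function p on ℕ, let ξ_1, ξ_2, ... be i.i.d. with distribution P(ξ_i = k) = p(k+1) for k ≥ -1 (i.e., ξ_i is the offspring count minus one), and set S_n = ξ_1 + ... + ξ_n. Then P(T has exactly n vertices) = (1/n)·P(S_n = -1). -/

import Mathlib

/-- Locally finite rooted plane trees. -/
inductive PlaneTree : Type
  | node : List PlaneTree → PlaneTree

namespace PlaneTree

/-- Number of vertices of a plane tree. -/
def size : PlaneTree → ℕ
  | node ts => 1 + (ts.attach.map fun t => size t.1).sum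
decreasing_by
  simp_wf
  have := List.sizeOf_lt_of_mem t.2
  try simp only [PlaneTree.node.sizeOf_spec] at *
  omega

/-- Galton–Watson weight of a tree: product over all vertices of `p (number of
children)`.  For an offspring pmf `p`, this is the probability that the
Galton–Watson tree equals the given tree. -/
def weight (p : ℕ → ℝ) : PlaneTree → ℝ
  | node ts => p ts.length * (ts.attach.map fun t => weight p t.1).prod
decreasing_by
  simp_wf
  have := List.sizeOf_lt_of_mem t.2
  try simp only [PlaneTree.node.sizeOf_spec] at *
  omega

/-- Łukasiewicz code of a tree: preorder list of numbers of children. -/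
def code : PlaneTree → List ℕ
  | node ts => ts.length :: (ts.attach.map fun t => code t.1).flatten
decreasing_by
  simp_wf
  have := List.sizeOf_lt_of_mem t.2
  try simp only [PlaneTree.node.sizeOf_spec] at *
  omega

theorem code_node (ts : List PlaneTree) :
    code (node ts) = ts.length :: (ts.map code).flatten := by
  rw [code]
  simp

theorem size_node (ts : List PlaneTree) :
    size (node ts) = 1 + (ts.map size).sum := by
  rw [size]
  simp

theorem weight_node (p : ℕ → ℝ) (ts : List PlaneTree) :
    weight p (node ts) = p ts.length * (ts.map (weight p)).prod := by
  rw [weight]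
  simp

theorem code_length : ∀ t : PlaneTree, (code t).length = t.size
  | node ts => by
    rw [code_node, size_node]
    simp only [List.length_cons, List.length_flatten, List.map_map]
    have : List.map (List.length ∘ code) ts = List.map size ts :=
      List.map_congr_left fun t ht => code_length t
    rw [this]
    omega
decreasing_by
  have := List.sizeOf_lt_of_mem (by assumption : t ∈ ts)
  simp only [PlaneTree.node.sizeOf_spec] at *
  omega

end PlaneTree

lemma sum_map_pred (L : List ℕ) (h : ∀ x ∈ L, 1 ≤ x) :
    (L.map (fun x => x - 1)).sum + L.length = L.sum := by
  induction L with
  | nil => simp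
  | cons a L ih =>
    simp only [List.map_cons, List.sum_cons, List.length_cons]
    have ha := h a List.mem_cons_self
    have := ih (fun x hx => h x (List.mem_cons_of_mem a hx))
    omega

namespace PlaneTree

theorem code_length_pos (t : PlaneTree) : 1 ≤ (code t).length := by
  obtain ⟨ts⟩ := t
  rw [code_node]
  simp

theorem code_sum : ∀ t : PlaneTree, (code t).sum + 1 = (code t).length
  | node ts => by
    rw [code_node]
    simp only [List.sum_cons, List.length_cons, List.length_flatten, List.sum_flatten,
      List.map_map]
    have h1 : List.map (List.sum ∘ code) ts
        = List.map (fun x => x - 1) (List.map (List.length ∘ code) ts) := by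
      rw [List.map_map]
      exact List.map_congr_left fun t ht => by
        have := code_sum t
        simp only [Function.comp]; omega
    have h2 : ∀ x ∈ List.map (List.length ∘ code) ts, 1 ≤ x := by
      intro x hx
      obtain ⟨t, ht, rfl⟩ := List.mem_map.1 hx
      exact code_length_pos t
    have h4 : ts.length = (List.map (List.length ∘ code) ts).length := by simp
    have h5 := sum_map_pred _ h2
    rw [h1]
    omega
decreasing_by
  have := List.sizeOf_lt_of_mem (by assumption : t ∈ ts)
  simp only [PlaneTree.node.sizeOf_spec] at *
  omega

theorem code_prod (p : ℕ → ℝ) : ∀ t : PlaneTree, ((code t).map p).prod = weight p t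
  | node ts => by
    rw [code_node, weight_node]
    simp only [List.map_cons, List.prod_cons, List.map_flatten, List.prod_flatten,
      List.map_map]
    congr 1
    exact congrArg List.prod
      (List.map_congr_left fun t ht => code_prod p t)
decreasing_by
  have := List.sizeOf_lt_of_mem (by assumption : t ∈ ts)
  simp only [PlaneTree.node.sizeOf_spec] at *
  omega

mutual

theorem code_take : ∀ t : PlaneTree, ∀ k < (code t).length, k ≤ ((code t).take k).sum
  | node ts => by
    intro k hk
    rw [code_node] at hk ⊢
    match k with
    | 0 => simp
    | k + 1 =>
      simp only [List.length_cons] at hk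
      have hk' : k < ((ts.map code).flatten).length := by omega
      have := fcode_take ts k hk'
      simp only [List.take_succ_cons, List.sum_cons]
      omega
termination_by t => sizeOf t
decreasing_by
  simp only [PlaneTree.node.sizeOf_spec] at *
  omega

theorem fcode_take : ∀ ts : List PlaneTree, ∀ k < ((ts.map code).flatten).length,
    k + 1 ≤ (((ts.map code).flatten).take k).sum + ts.length
  | [] => by intro k hk; simp at hk
  | t :: ts => by
    intro k hk
    simp only [List.map_cons, List.flatten_cons, List.length_append, List.length_cons] at hk ⊢
    by_cases hkL : k < (code t).length
    · rw [List.take_append_of_le_length (le_of_lt hkL)]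
      have := code_take t k hkL
      omega
    · push_neg at hkL
      obtain ⟨k', rfl⟩ : ∃ k', k = (code t).length + k' := ⟨k - (code t).length, by omega⟩
      rw [List.take_append, Nat.add_sub_cancel_left, List.take_of_length_le (by omega)]
      have hk' : k' < ((ts.map code).flatten).length := by omega
      have h1 := fcode_take ts k' hk'
      have h2 := code_sum t
      simp only [List.sum_append]
      omega
termination_by ts => sizeOf ts
decreasing_by
  all_goals simp only [List.cons.sizeOf_spec] at *
  · omega
  · omega

end

end PlaneTree

namespace PlaneTree

/-- Łukasiewicz characterization of codes of plane trees. -/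
def IsCode (l : List ℕ) : Prop :=
  l.sum + 1 = l.length ∧ ∀ k < l.length, k ≤ (l.take k).sum

theorem isCode_code (t : PlaneTree) : IsCode (code t) :=
  ⟨code_sum t, code_take t⟩

mutual

theorem code_inj : ∀ (t u : PlaneTree) (r s : List ℕ),
    code t ++ r = code u ++ s → t = u ∧ r = s
  | node a, node b => by
    intro r s h
    rw [code_node, code_node] at h
    simp only [List.cons_append, List.cons.injEq, List.append_assoc] at h
    obtain ⟨hlen, h⟩ := h
    obtain ⟨h1, h2⟩ := fcode_inj a b r s hlen h
    exact ⟨by rw [h1], h2⟩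
termination_by t => sizeOf t
decreasing_by
  simp only [PlaneTree.node.sizeOf_spec] at *
  omega

theorem fcode_inj : ∀ (a b : List PlaneTree) (r s : List ℕ), a.length = b.length →
    (a.map code).flatten ++ r = (b.map code).flatten ++ s → a = b ∧ r = s
  | [], [], r, s => by simp
  | [], b :: bs, r, s => by intro hlen; simp at hlen
  | a :: as, [], r, s => by intro hlen; simp at hlen
  | a :: as, b :: bs, r, s => by
    intro hlen h
    simp only [List.map_cons, List.flatten_cons, List.append_assoc] at h
    obtain ⟨h1, h2⟩ := code_inj a b _ _ h
    simp only [List.length_cons] at hlen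
    obtain ⟨h3, h4⟩ := fcode_inj as bs r s (by omega) h2
    exact ⟨by rw [h1, h3], h4⟩
termination_by a => sizeOf a
decreasing_by
  all_goals simp only [List.cons.sizeOf_spec] at *
  · omega
  · omega

end

theorem decode_forest : ∀ (l : List ℕ) (m : ℕ), l.sum + m = l.length →
    (∀ k < l.length, k < (l.take k).sum + m) →
    ∃ ts : List PlaneTree, ts.length = m ∧ (ts.map code).flatten = l
  | [], m => by
    intro h _
    exact ⟨[], by simpa using h.symm, by simp⟩
  | c :: r, m => by
    intro h hp
    simp only [List.sum_cons, List.length_cons] at h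
    have hm : 1 ≤ m := by
      have := hp 0 (by simp)
      simp at this; omega
    have hr : r.sum + (m - 1 + c) = r.length := by omega
    have hrp : ∀ k < r.length, k < (r.take k).sum + (m - 1 + c) := by
      intro k hk
      have := hp (k + 1) (by simp; omega)
      simp only [List.take_succ_cons, List.sum_cons] at this
      omega
    obtain ⟨ts', hlen', hjoin⟩ := decode_forest r (m - 1 + c) hr hrp
    have hc : c ≤ ts'.length := by omega
    refine ⟨node (ts'.take c) :: ts'.drop c, ?_, ?_⟩
    · simp only [List.length_cons, List.length_drop]
      omega
    · simp only [List.map_cons, List.flatten_cons, code_node, List.length_take,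
        List.cons_append]
      rw [min_eq_left hc, ← List.flatten_append, ← List.map_append, List.take_append_drop,
        hjoin]

theorem code_surj (l : List ℕ) (hl : IsCode l) : ∃ t : PlaneTree, code t = l := by
  obtain ⟨ts, hlen, hjoin⟩ := decode_forest l 1 hl.1 (fun k hk => by
    have := hl.2 k hk; omega)
  match ts, hlen with
  | [t], _ =>
    refine ⟨t, ?_⟩
    simpa using hjoin

end PlaneTree

namespace PlaneTree

section Cycle

variable (l : List ℕ) (n : ℕ)

/-- The periodic extension of `l`. -/
def ext (i : ℕ) : ℕ := l.getD (i % n) 0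

/-- Integer height function of the Łukasiewicz walk of the periodic extension. -/
def ht (m : ℕ) : ℤ := (∑ i ∈ Finset.range m, (ext l n i : ℤ)) - m

variable (hl : l.length = n) (hs : l.sum + 1 = n) (hn : 1 ≤ n)
include hl hn

theorem rot_take_sum : ∀ j, j < n → ∀ k, k ≤ n →
    (((l.rotate j).take k).sum : ℤ) = ∑ i ∈ Finset.range k, (ext l n (j + i) : ℤ) := by
  subst hl
  intro j hj k hk
  induction k with
  | zero => simp
  | succ k ih =>
    have hkl : k < (l.rotate j).length := by rw [List.length_rotate]; omega
    rw [List.sum_take_succ _ k hkl, Finset.sum_range_succ, ← ih (by omega)]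
    push_cast
    congr 1
    have h1 : (l.rotate j)[k] = l.get ⟨(k + j) % l.length, by
        apply Nat.mod_lt; omega⟩ := List.get_rotate l j ⟨k, hkl⟩
    rw [h1]
    unfold ext
    rw [List.getD_eq_getElem l 0 (by apply Nat.mod_lt; omega)]
    simp only [List.get_eq_getElem]
    congr 2
    rw [Nat.add_comm]

include hs

theorem ht_shift : ∀ m, ht l n (m + n) = ht l n m - 1 := by
  intro m
  induction m with
  | zero =>
    have h0 := rot_take_sum l n hl hn 0 (by omega) n le_rfl
    rw [List.rotate_zero, List.take_of_length_le (le_of_eq hl)] at h0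
    simp only [zero_add] at h0
    unfold ht
    rw [zero_add, ← h0]
    simp only [Finset.range_zero, Finset.sum_empty]
    have : l.sum + 1 = n := hs
    omega
  | succ m ih =>
    have hext : ext l n (m + n) = ext l n m := by
      unfold ext
      congr 1
      exact Nat.add_mod_right m n
    have e1 : m + 1 + n = (m + n) + 1 := by omega
    unfold ht at *
    rw [e1, Finset.sum_range_succ, Finset.sum_range_succ, hext] at *
    push_cast at *
    omega

theorem isCode_rotate_iff : ∀ j, j < n →
    (IsCode (l.rotate j) ↔ ∀ k, k < n → ht l n j ≤ ht l n (j + k)) := by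
  intro j hj
  have hsum : (l.rotate j).sum = l.sum := (l.rotate_perm j).sum_eq
  have hlen : (l.rotate j).length = n := by rw [List.length_rotate, hl]
  constructor
  · intro ⟨_, h2⟩ k hk
    have hle := h2 k (by omega)
    have hts := rot_take_sum l n hl hn j hj k (by omega)
    unfold ht
    rw [Finset.sum_range_add]
    have : (k : ℤ) ≤ ∑ i ∈ Finset.range k, (ext l n (j + i) : ℤ) := by
      rw [← hts]; exact_mod_cast hle
    push_cast
    omega
  · intro h
    refine ⟨by omega, ?_⟩
    intro k hk
    rw [hlen] at hk
    have hh := h k hk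
    have hts := rot_take_sum l n hl hn j hj k (by omega)
    unfold ht at hh
    rw [Finset.sum_range_add] at hh
    have : (k : ℤ) ≤ ∑ i ∈ Finset.range k, (ext l n (j + i) : ℤ) := by push_cast at hh ⊢; omega
    rw [← hts] at this
    exact_mod_cast this

theorem existsUnique_rotate_isCode : ∃! j, j < n ∧ IsCode (l.rotate j) := by
  -- take the first minimizer of `ht` on `[0, n)`
  have hP : ∃ j, j < n ∧ ∀ i < n, ht l n j ≤ ht l n i := by
    obtain ⟨x, hx, hmin⟩ := Finset.exists_min_image (Finset.range n) (ht l n)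
      ⟨0, Finset.mem_range.2 (by omega)⟩
    exact ⟨x, Finset.mem_range.1 hx, fun i hi => hmin i (Finset.mem_range.2 hi)⟩
  classical
  obtain ⟨hjn, hjmin⟩ := Nat.find_spec hP
  set j := Nat.find hP with hjdef
  have hfirst : ∀ i < j, ht l n j < ht l n i := by
    intro i hij
    have hin : i < n := by omega
    have hni := Nat.find_min hP hij
    push_neg at hni
    obtain ⟨i', hi', hlt⟩ := hni hin
    exact lt_of_le_of_lt (hjmin i' hi') hlt
  have hvalid : ∀ k, k < n → ht l n j ≤ ht l n (j + k) := by
    intro k hk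
    by_cases hjk : j + k < n
    · exact hjmin _ hjk
    · have he : j + k = (j + k - n) + n := by omega
      have hsh := ht_shift l n hl hs hn (j + k - n)
      rw [he, hsh]
      have h2 := hfirst (j + k - n) (by omega)
      omega
  refine ⟨j, ⟨hjn, (isCode_rotate_iff l n hl hs hn j hjn).2 hvalid⟩, ?_⟩
  rintro j' ⟨hj'n, hcode'⟩
  have hvalid' := (isCode_rotate_iff l n hl hs hn j' hj'n).1 hcode'
  by_contra hne
  rcases lt_or_gt_of_ne hne with h | h
  · -- j' < j
    have h1 := hvalid' (j - j') (by omega)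
    have e1 : j' + (j - j') = j := by omega
    rw [e1] at h1
    have h2 := hvalid (j' + n - j) (by omega)
    have e2 : j + (j' + n - j) = j' + n := by omega
    rw [e2, ht_shift l n hl hs hn j'] at h2
    omega
  · -- j < j'
    have h1 := hvalid (j' - j) (by omega)
    have e1 : j + (j' - j) = j' := by omega
    rw [e1] at h1
    have h2 := hvalid' (j + n - j') (by omega)
    have e2 : j' + (j + n - j') = j + n := by omega
    rw [e2, ht_shift l n hl hs hn j] at h2
    omega

end Cycle

end PlaneTree

namespace PlaneTree

/-- Lists of length `n` with all entries `< n`, as a finset. -/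
def Vn (n : ℕ) : Finset (List ℕ) :=
  Finset.image (fun g : Fin n → Fin n => List.ofFn fun i => (g i : ℕ)) Finset.univ

lemma mem_Vn {n : ℕ} {l : List ℕ} : l ∈ Vn n ↔ l.length = n ∧ ∀ x ∈ l, x < n := by
  constructor
  · intro h
    rw [Vn, Finset.mem_image] at h
    obtain ⟨g, -, rfl⟩ := h
    refine ⟨by simp, ?_⟩
    intro x hx
    rw [List.mem_ofFn] at hx
    obtain ⟨i, rfl⟩ := hx
    exact (g i).2
  · rintro ⟨hlen, hbd⟩
    subst hlen
    rw [Vn, Finset.mem_image]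
    refine ⟨fun i => ⟨l.get i, hbd _ (l.get_mem i)⟩, Finset.mem_univ _, ?_⟩
    exact List.ofFn_get l

end PlaneTree

open PlaneTree

/-- Dwass's formula. For a Galton–Watson tree `T` with offspring
pmf `p`, `P(T has n vertices) = (1/n) P(S_n = -1)` where `S_n = ξ_1 + ⋯ + ξ_n`
and the `ξ_i` are i.i.d. with `P(ξ = k) = p (k+1)`.  Here the left-hand side is
the total weight of plane trees with `n` vertices, and `P(S_n = -1)` is written
as the sum over offspring vectors `f : Fin n → ℕ` with `∑ f i = n - 1` of
`∏ p (f i)`. -/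
theorem dwass_formula (p : ℕ → ℝ) (hp : ∀ k, 0 ≤ p k) (hsum : ∑' k, p k = 1)
    (n : ℕ) (hn : 1 ≤ n) :
    ∑' t : {t : PlaneTree // t.size = n}, PlaneTree.weight p t.1
      = (1 / (n : ℝ)) * ∑' f : Fin n → ℕ,
          (if (∑ i, f i) + 1 = n then ∏ i, p (f i) else 0) := by
  classical
  set wl : List ℕ → ℝ := fun l => (l.map p).prod with hwl
  set C : Finset (List ℕ) := (Vn n).filter (fun l => IsCode l) with hCdef
  set A : Finset (List ℕ) := (Vn n).filter (fun l => l.sum + 1 = n) with hAdef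
  -- membership facts
  have hmemA : ∀ l ∈ A, l.length = n ∧ l.sum + 1 = n := by
    intro l hl
    rw [hAdef, Finset.mem_filter, mem_Vn] at hl
    exact ⟨hl.1.1, hl.2⟩
  -- Step 1: LHS = ∑ l in C, wl l
  have hVcode : ∀ t : PlaneTree, t.size = n → code t ∈ C := by
    intro t ht
    have hlen : (code t).length = n := by rw [code_length, ht]
    have hsum := code_sum t
    rw [hCdef, Finset.mem_filter, mem_Vn]
    refine ⟨⟨hlen, ?_⟩, isCode_code t⟩
    intro x hx
    have := List.le_sum_of_mem hx
    omega
  have hbij : Function.Bijective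
      (fun t : {t : PlaneTree // t.size = n} =>
        (⟨code t.1, hVcode t.1 t.2⟩ : {l // l ∈ C})) := by
    constructor
    · rintro ⟨t, ht⟩ ⟨u, hu⟩ h
      simp only [Subtype.mk.injEq] at h ⊢
      have := code_inj t u [] [] (by rw [h])
      exact this.1
    · rintro ⟨l, hl⟩
      rw [hCdef, Finset.mem_filter, mem_Vn] at hl
      obtain ⟨t, ht⟩ := code_surj l hl.2
      refine ⟨⟨t, ?_⟩, ?_⟩
      · rw [← code_length, ht, hl.1.1]
      · simp only [Subtype.mk.injEq]
        exact ht
  have hL : (∑' t : {t : PlaneTree // t.size = n}, PlaneTree.weight p t.1)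
      = ∑ l ∈ C, wl l :=
    calc ∑' t : {t : PlaneTree // t.size = n}, PlaneTree.weight p t.1
        = ∑' t : {t : PlaneTree // t.size = n}, wl (code t.1) :=
          tsum_congr fun t => (code_prod p t.1).symm
      _ = ∑' l : {l // l ∈ C}, wl l.1 :=
          Equiv.tsum_eq (Equiv.ofBijective _ hbij) (fun l => wl l.1)
      _ = ∑ l ∈ C, wl l := Finset.tsum_subtype C wl
  -- Step 2: RHS sum = ∑ l in A, wl l
  set B : Finset (Fin n → ℕ) :=
    Finset.image (fun g : Fin n → Fin n => fun i => (g i : ℕ)) Finset.univ with hBdef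
  have hR1 : (∑' f : Fin n → ℕ, if (∑ i, f i) + 1 = n then ∏ i, p (f i) else 0)
      = ∑ f ∈ B, (if (∑ i, f i) + 1 = n then ∏ i, p (f i) else 0) := by
    apply tsum_eq_sum
    intro f hf
    rw [if_neg]
    intro hc
    apply hf
    rw [hBdef, Finset.mem_image]
    refine ⟨fun i => ⟨f i, ?_⟩, Finset.mem_univ _, rfl⟩
    have := Finset.single_le_sum (f := f) (fun i _ => Nat.zero_le _) (Finset.mem_univ i)
    omega
  have hR2 : (∑ f ∈ B, (if (∑ i, f i) + 1 = n then ∏ i, p (f i) else 0))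
      = ∑ l ∈ A, wl l := by
    rw [hBdef, Finset.sum_image (by
      intro x _ y _ h
      funext i
      exact Fin.val_injective (congrFun h i))]
    rw [hAdef, Finset.sum_filter, Vn, Finset.sum_image (by
      intro x _ y _ h
      funext i
      exact Fin.val_injective (congrFun (List.ofFn_injective h) i))]
    apply Finset.sum_congr rfl
    intro g _
    rw [List.sum_ofFn, hwl]
    simp only [List.map_ofFn]
    rw [List.prod_ofFn]
    rfl
  -- Step 3: cycle lemma, ∑ l in A, wl l = n * ∑ l in C, wl l
  have hcard : ∀ l ∈ A, (∑ j ∈ Finset.range n, if IsCode (l.rotate j) then wl l else 0)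
      = wl l := by
    intro l hlA
    obtain ⟨hlen, hsuml⟩ := hmemA l hlA
    obtain ⟨j, ⟨hj, hjc⟩, huniq⟩ := existsUnique_rotate_isCode l n hlen hsuml hn
    rw [Finset.sum_eq_single j]
    · rw [if_pos hjc]
    · intro b hb hbj
      rw [if_neg]
      intro hc
      exact hbj (huniq b ⟨Finset.mem_range.1 hb, hc⟩)
    · intro hjn
      exact absurd (Finset.mem_range.2 hj) hjn
  have hrot : ∀ j, j < n →
      (∑ l ∈ A, if IsCode (l.rotate j) then wl l else 0) = ∑ l ∈ C, wl l := by
    intro j hj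
    have hAC : (∑ l ∈ A, if IsCode (l.rotate j) then wl l else 0)
        = ∑ l ∈ A, if IsCode l then wl l else 0 := by
      apply Finset.sum_nbij' (fun l => l.rotate j) (fun l => l.rotate (n - j))
      · intro l hl
        rw [hAdef, Finset.mem_filter, mem_Vn] at hl ⊢
        refine ⟨⟨?_, ?_⟩, ?_⟩
        · rw [List.length_rotate]; exact hl.1.1
        · intro x hx
          exact hl.1.2 x ((l.rotate_perm j).mem_iff.1 hx)
        · rw [(l.rotate_perm j).sum_eq]; exact hl.2
      · intro l hl
        rw [hAdef, Finset.mem_filter, mem_Vn] at hl ⊢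
        refine ⟨⟨?_, ?_⟩, ?_⟩
        · rw [List.length_rotate]; exact hl.1.1
        · intro x hx
          exact hl.1.2 x ((l.rotate_perm _).mem_iff.1 hx)
        · rw [(l.rotate_perm _).sum_eq]; exact hl.2
      · intro l hl
        rw [List.rotate_rotate]
        have : j + (n - j) = n := by omega
        rw [this, ← (hmemA l hl).1, List.rotate_length]
      · intro l hl
        rw [List.rotate_rotate]
        have : n - j + j = n := by omega
        rw [this, ← (hmemA l hl).1, List.rotate_length]
      · intro l hl
        congr 1
        rw [hwl]
        exact (((l.rotate_perm j).map p).prod_eq).symm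
    rw [hAC, ← Finset.sum_filter]
    apply Finset.sum_congr _ (fun _ _ => rfl)
    rw [hAdef, hCdef, Finset.filter_filter]
    apply Finset.filter_congr
    intro l hlV
    rw [mem_Vn] at hlV
    constructor
    · rintro ⟨-, h⟩; exact h
    · intro h
      refine ⟨?_, h⟩
      rw [← hlV.1]
      exact h.1
  have hAsum : ∑ l ∈ A, wl l = (n : ℝ) * ∑ l ∈ C, wl l := by
    calc ∑ l ∈ A, wl l
        = ∑ l ∈ A, ∑ j ∈ Finset.range n, (if IsCode (l.rotate j) then wl l else 0) :=
          (Finset.sum_congr rfl hcard).symm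
      _ = ∑ j ∈ Finset.range n, ∑ l ∈ A, (if IsCode (l.rotate j) then wl l else 0) :=
          Finset.sum_comm
      _ = ∑ j ∈ Finset.range n, ∑ l ∈ C, wl l :=
          Finset.sum_congr rfl (fun j hj => hrot j (Finset.mem_range.1 hj))
      _ = (n : ℝ) * ∑ l ∈ C, wl l := by
          rw [Finset.sum_const, Finset.card_range, nsmul_eq_mul]
  rw [hL, hR1, hR2, hAsum]
  have hn0 : (n : ℝ) ≠ 0 := by
    simp only [ne_eq, Nat.cast_eq_zero]
    omega
  field_simp
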